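/- There exists β ∈ ℂ with β ∉ ℝ such that 1 + 6β² + 8β³ + 2β⁴ + 8β⁵ + 6β⁶ + β⁸ = 0, |β − 1| < (1/√2)·|β + 1|, and 1 + β² + 2β³ ≠ 0. -/

import Mathlib

/-- There is a non-real zero `β` of `1 + 6β² + 8β³ + 2β⁴ + 8β⁵ + 6β⁶ + β⁸` lying strictly
inside the region `|β − 1| < (1/√2)·|β + 1|`, at which `1 + β² + 2β³ ≠ 0`. -/
theorem exists_nonreal_zero_inside :
    ∃ β : ℂ, β ∉ Set.range ((↑) : ℝ → ℂ)
      ∧ 1 + 6 * β ^ 2 + 8 * β ^ 3 + 2 * β ^ 4 + 8 * β ^ 5 + 6 * β ^ 6 + β ^ 8 = 0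
      ∧ ‖β - 1‖ < (1 / Real.sqrt 2) * ‖β + 1‖
      ∧ 1 + β ^ 2 + 2 * β ^ 3 ≠ 0 := by
  -- find a real root y of y³ - 2y² + 6y - 4 in (2/3, 1)
  obtain ⟨y, hy, hyc⟩ : ∃ y ∈ Set.Ioo (2/3 : ℝ) 1, y^3 - 2*y^2 + 6*y - 4 = 0 := by
    have hcont : ContinuousOn (fun y : ℝ => y^3 - 2*y^2 + 6*y - 4) (Set.Icc (2/3) 1) := by
      fun_prop
    have h := intermediate_value_Ioo (by norm_num : (2/3 : ℝ) ≤ 1) hcont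
    have h0 : (0 : ℝ) ∈ Set.Ioo ((2/3:ℝ)^3 - 2*(2/3)^2 + 6*(2/3) - 4)
        ((1:ℝ)^3 - 2*1^2 + 6*1 - 4) := by norm_num
    obtain ⟨x, hx, hfx⟩ := h h0
    exact ⟨x, hx, hfx⟩
  obtain ⟨hy0, hy1⟩ := hy
  set t : ℝ := Real.sqrt (4 - y^2) with ht_def
  have ht2 : t^2 = 4 - y^2 := Real.sq_sqrt (by nlinarith)
  have ht0 : 0 < t := Real.sqrt_pos.mpr (by nlinarith)
  set β : ℂ := (↑(y/2) : ℂ) + (↑(t/2) : ℂ) * Complex.I with hβ_def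
  have hre : β.re = y/2 := by simp [hβ_def]
  have him : β.im = t/2 := by simp [hβ_def]
  have htc : (t : ℂ)^2 = 4 - (y : ℂ)^2 := by exact_mod_cast congrArg (Complex.ofReal ·) ht2
  have hβ : β^2 = (y : ℂ) * β - 1 := by
    rw [hβ_def]
    push_cast
    linear_combination ((t:ℂ)^2/4) * Complex.I_sq + (-1/4 : ℂ) * htc
  have hcC : (y : ℂ)^3 - 2*(y:ℂ)^2 + 6*(y:ℂ) - 4 = 0 := by exact_mod_cast congrArg (Complex.ofReal ·) hyc
  refine ⟨β, ?_, ?_, ?_, ?_⟩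
  · rintro ⟨r, hr⟩
    have : β.im = 0 := by rw [← hr]; simp
    rw [him] at this
    linarith
  · linear_combination
      ((9 - 8*(y:ℂ) - 10*(y:ℂ)^2 + 8*(y:ℂ)^3 + (y:ℂ)^4 + (y:ℂ)^6)
        + (-7*(y:ℂ) + 8*(y:ℂ)^2 + 2*(y:ℂ)^3 + (y:ℂ)^5) * β
        + (-3 + 8*(y:ℂ) + 3*(y:ℂ)^2 + (y:ℂ)^4) * β^2
        + (8 + 4*(y:ℂ) + (y:ℂ)^3) * β^3
        + (5 + (y:ℂ)^2) * β^4
        + (y:ℂ) * β^5 + β^6) * hβ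
      + (((y:ℂ)^4 + 2*(y:ℂ)^3 - 2*(y:ℂ)^2 - 4*(y:ℂ)) * β
        + (-(y:ℂ)^3 - 2*(y:ℂ)^2 + (y:ℂ) + 2)) * hcC
  · have habs1 : ‖β - 1‖ = Real.sqrt (2 - y) := by
      rw [Complex.norm_def, Complex.normSq_apply]
      congr 1
      simp only [Complex.sub_re, Complex.sub_im, hre, him, Complex.one_re, Complex.one_im]
      nlinarith [ht2]
    have habs2 : ‖β + 1‖ = Real.sqrt (2 + y) := by
      rw [Complex.norm_def, Complex.normSq_apply]
      congr 1
      simp only [Complex.add_re, Complex.add_im, hre, him, Complex.one_re, Complex.one_im]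
      nlinarith [ht2]
    rw [habs1, habs2]
    have h2 : (1 / Real.sqrt 2) = Real.sqrt (1/2) := by
      rw [one_div, ← Real.sqrt_inv]
      norm_num
    rw [h2, ← Real.sqrt_mul (by norm_num)]
    apply Real.sqrt_lt_sqrt (by linarith)
    nlinarith
  · intro h0
    have key : ((2*y^2 + y - 2 : ℝ) : ℂ) * β - 2*(y:ℂ) = 0 := by
      push_cast
      linear_combination h0 + (-2*β - 1 - 2*(y:ℂ)) * hβ
    have him0 : (2*y^2 + y - 2) * (t/2) = 0 := by
      have h := congrArg Complex.im key
      simpa only [Complex.sub_im, Complex.im_ofReal_mul, Complex.ofReal_im,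
        him, Complex.mul_im, Complex.ofReal_re, Complex.im_ofNat, zero_mul, zero_add, add_zero, Complex.zero_im, mul_zero, sub_zero] using h
    have hfac : 2*y^2 + y - 2 = 0 := by
      rcases mul_eq_zero.mp him0 with h | h
      · exact h
      · linarith
    nlinarith [hyc, hfac]
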